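/- Let V ⊂ (C*)^n be an algebraic variety with defining ideal I(V). Then the amoeba of V equals the intersection over all f ∈ I(V) of the amoebas of the hypersurfaces V_f = {z ∈ (C*)^n : f(z) = 0}: Log(V) = ∩_{f ∈ I(V)} Log(V_f). -/

import Mathlib

open MvPolynomial Complex Set

/-- The amoeba of an algebraic subvariety V of the torus (ℂ*)ⁿ is the
intersection of the amoebas of the hypersurfaces V_f over all f in the
defining ideal of V. -/
theorem amoeba_eq_iInter_hypersurface_amoebas (n : ℕ) (V : Set (Fin n → ℂ))
    (hV : V = {z : Fin n → ℂ | (∀ i, z i ≠ 0) ∧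
        ∀ f : MvPolynomial (Fin n) ℂ,
          (∀ w ∈ V, MvPolynomial.eval w f = 0) → MvPolynomial.eval z f = 0}) :
    (fun z : Fin n → ℂ => fun i => Real.log ‖z i‖) '' V =
      ⋂ f ∈ {f : MvPolynomial (Fin n) ℂ | ∀ w ∈ V, MvPolynomial.eval w f = 0},
        (fun z : Fin n → ℂ => fun i => Real.log ‖z i‖) ''
          {z : Fin n → ℂ | (∀ i, z i ≠ 0) ∧ MvPolynomial.eval z f = 0} := by
  classical
  apply Set.Subset.antisymm
  · rintro _ ⟨z, hz, rfl⟩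
    refine Set.mem_iInter₂.mpr fun f hf => ⟨z, ⟨?_, hf z hz⟩, rfl⟩
    have := hV ▸ hz
    exact this.1
  · intro x hx
    by_contra hxV
    have hx' : ∀ f : MvPolynomial (Fin n) ℂ, (∀ w ∈ V, eval w f = 0) →
        ∃ z : Fin n → ℂ, ((∀ i, z i ≠ 0) ∧ eval z f = 0) ∧
          (fun i => Real.log ‖z i‖) = x := by
      intro f hf
      have := Set.mem_iInter₂.mp hx f hf
      obtain ⟨z, hz, hzx⟩ := this
      exact ⟨z, hz, hzx⟩
    set r : Fin n → ℝ := fun i => Real.exp (x i) with hr_def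
    have hr : ∀ i, 0 < r i := fun i => Real.exp_pos _
    set T : Set (Fin n → ℂ) := {z | ∀ i, ‖z i‖ = r i} with hT_def
    -- points of T have log-image x
    have hTx : ∀ z ∈ T, (fun i => Real.log ‖z i‖) = x := by
      intro z hz
      funext i
      rw [hz i, hr_def, Real.log_exp]
    have hTne : ∀ z ∈ T, ∀ i, z i ≠ 0 := by
      intro z hz i h0
      have := hz i
      rw [h0] at this
      simp at this
      exact absurd this.symm (ne_of_gt (hr i))
    -- T misses V
    have hTV : ∀ t ∈ T, t ∉ V := by
      intro t ht htV
      exact hxV ⟨t, htV, hTx t ht⟩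
    -- T is compact
    have hTcomp : IsCompact T := by
      have : T = Set.univ.pi (fun i => Metric.sphere (0 : ℂ) (r i)) := by
        ext z
        simp [hT_def, Set.mem_pi, Metric.mem_sphere, dist_zero_right]
      rw [this]
      exact isCompact_univ_pi fun i => isCompact_sphere 0 (r i)
    -- open cover of T by nonvanishing sets of ideal elements
    set I : Set (MvPolynomial (Fin n) ℂ) := {f | ∀ w ∈ V, eval w f = 0} with hI_def
    have hcov : T ⊆ ⋃ f ∈ I, {z : Fin n → ℂ | eval z f ≠ 0} := by
      intro t ht
      have htV := hTV t ht
      rw [hV] at htV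
      simp only [Set.mem_setOf_eq, not_and, not_forall] at htV
      obtain ⟨f, hf, hft⟩ := htV (hTne t ht)
      exact Set.mem_biUnion hf hft
    obtain ⟨s, hsI, hsfin, hscov⟩ := hTcomp.elim_finite_subcover_image
      (fun f _ => (isOpen_compl_iff.mpr (isClosed_eq f.continuous_eval continuous_const)))
      hcov
    set s' : Finset (MvPolynomial (Fin n) ℂ) := hsfin.toFinset with hs'_def
    -- degree bound
    set D : ℕ := s'.sup totalDegree with hD_def
    have hdeg : ∀ f ∈ s', ∀ d ∈ f.support, ∀ i, d i ≤ D := by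
      intro f hf d hd i
      have h1 : d i ≤ d.sum fun _ e => e := by
        by_cases h : i ∈ d.support
        · exact Finset.single_le_sum (fun _ _ => Nat.zero_le _) h
        · simp [Finsupp.notMem_support_iff.mp h]
      exact h1.trans ((le_totalDegree hd).trans (Finset.le_sup hf))
    set N : Fin n →₀ ℕ := Finsupp.equivFunOnFinite.symm (fun _ => D) with hN_def
    have hN : ∀ i, N i = D := fun i => rfl
    -- the conjugate-reflected polynomial
    set dag : MvPolynomial (Fin n) ℂ → MvPolynomial (Fin n) ℂ := fun f =>
      ∑ d ∈ f.support, monomial (N - d)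
        ((starRingEnd ℂ) (f.coeff d) * ∏ i, ((r i : ℂ)) ^ (2 * d i)) with hdag_def
    -- key evaluation formula on T
    have hkey : ∀ f ∈ s', ∀ z ∈ T,
        eval z (dag f) = (∏ i, z i ^ D) * (starRingEnd ℂ) (eval z f) := by
      intro f hf z hz
      have hzc : ∀ i, z i * (starRingEnd ℂ) (z i) = ((r i : ℂ)) ^ 2 := by
        intro i
        rw [Complex.mul_conj]
        rw [Complex.normSq_eq_norm_sq]
        norm_cast
        rw [hz i]
      rw [hdag_def]
      simp only [map_sum, eval_monomial]
      rw [eval_eq' z f, map_sum]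
      rw [Finset.mul_sum]
      apply Finset.sum_congr rfl
      intro d hd
      have hle : ∀ i, d i ≤ D := hdeg f hf d hd
      simp only [map_mul, map_prod, map_pow]
      rw [Finsupp.prod_fintype _ _ (fun i => pow_zero _)]
      have hNd : ∀ i, (N - d) i = D - d i := by
        intro i
        rw [Finsupp.tsub_apply, hN]
      have hterm : ∀ i, ((r i : ℂ)) ^ (2 * d i) * z i ^ ((N - d) i)
          = z i ^ D * (starRingEnd ℂ) (z i) ^ d i := by
        intro i
        rw [hNd i]
        have h1 : z i ^ D = z i ^ (D - d i) * z i ^ d i := by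
          rw [← pow_add, Nat.sub_add_cancel (hle i)]
        calc ((r i : ℂ)) ^ (2 * d i) * z i ^ (D - d i)
            = z i ^ (D - d i) * (z i * (starRingEnd ℂ) (z i)) ^ d i := by
              rw [hzc i, ← pow_mul]; ring
          _ = z i ^ D * (starRingEnd ℂ) (z i) ^ d i := by
              rw [mul_pow, h1]; ring
      rw [mul_assoc, ← Finset.prod_mul_distrib,
        Finset.prod_congr rfl (fun i _ => hterm i), Finset.prod_mul_distrib]
      ring
    -- the witness polynomial
    set g : MvPolynomial (Fin n) ℂ := ∑ f ∈ s', f * dag f with hg_def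
    have hgI : ∀ w ∈ V, eval w g = 0 := by
      intro w hw
      rw [hg_def, map_sum]
      apply Finset.sum_eq_zero
      intro f hf
      rw [map_mul]
      have : f ∈ I := hsI (hsfin.mem_toFinset.mp hf)
      rw [this w hw, zero_mul]
    -- g does not vanish on T
    have hgT : ∀ t ∈ T, eval t g ≠ 0 := by
      intro t ht
      rw [hg_def, map_sum]
      have : ∀ f ∈ s', eval t (f * dag f) =
          (∏ i, t i ^ D) * ((Complex.normSq (eval t f) : ℂ)) := by
        intro f hf
        rw [map_mul, hkey f hf t ht]
        rw [← Complex.mul_conj]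
        ring
      rw [Finset.sum_congr rfl this, ← Finset.mul_sum]
      apply mul_ne_zero
      · apply Finset.prod_ne_zero_iff.mpr
        intro i _
        exact pow_ne_zero D (hTne t ht i)
      · -- some f in s' doesn't vanish at t
        have := hscov ht
        simp only [Set.mem_iUnion, Set.mem_setOf_eq] at this
        obtain ⟨f, hfs, hft⟩ := this
        have hfs' : f ∈ s' := hsfin.mem_toFinset.mpr hfs
        rw [← Complex.ofReal_sum]
        rw [Complex.ofReal_ne_zero]
        have hpos : 0 < ∑ f ∈ s', Complex.normSq (eval t f) := by
          apply Finset.sum_pos' (fun f _ => Complex.normSq_nonneg _)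
          exact ⟨f, hfs', Complex.normSq_pos.mpr hft⟩
        exact ne_of_gt hpos
    -- contradiction: x is in the amoeba of g
    obtain ⟨z, ⟨hz0, hzg⟩, hzx⟩ := hx' g hgI
    have hzT : z ∈ T := by
      intro i
      have : Real.log ‖z i‖ = x i := congrFun hzx i
      have hnorm : 0 < ‖z i‖ := norm_pos_iff.mpr (hz0 i)
      show ‖z i‖ = Real.exp (x i)
      rw [← this, Real.exp_log hnorm]
    exact hgT z hzT hzg
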